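/- Let L/K be a cyclic Galois extension of degree n with Galois group generated by σ, let 1 ≤ k ≤ n, and let U be a K-subspace of L of dimension k. Then there exists a monic polynomial w ∈ L[t] of degree k such that U = {x ∈ L : w(σ)x = 0}. -/

import Mathlib

variable {K L : Type*} [Field K] [Field L] [Algebra K L]

/-- The `K`-linear operator `w(σ)` on `L` associated to a polynomial `w ∈ L[t]`,
namely `x ↦ ∑ i, (coeff of tⁱ in w) * σⁱ(x)`. -/
noncomputable def polyOp (σ : L ≃ₐ[K] L) (w : Polynomial L) : L →ₗ[K] L :=
  ∑ i ∈ Finset.range (w.natDegree + 1),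
    (LinearMap.mulLeft K (w.coeff i)).comp ((σ ^ i : L ≃ₐ[K] L).toLinearMap)

open Polynomial

lemma polyOp_apply (σ : L ≃ₐ[K] L) (w : Polynomial L) (x : L) :
    polyOp σ w x = ∑ i ∈ Finset.range (w.natDegree + 1), w.coeff i * (σ ^ i) x := by
  simp [polyOp, LinearMap.sum_apply]

lemma polyOp_apply_sum (σ : L ≃ₐ[K] L) (w : Polynomial L) (x : L) :
    polyOp σ w x = w.sum fun i a => a * (σ ^ i) x := by
  rw [polyOp_apply]; exact (w.sum_over_range (f := fun i a => a * (σ ^ i) x) fun n => zero_mul _).symm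

noncomputable def polyOpHom (σ : L ≃ₐ[K] L) : Polynomial L →+ (L →ₗ[K] L) where
  toFun := polyOp σ
  map_zero' := by ext x; simp [polyOp_apply_sum]
  map_add' p q := by
    ext x
    simp only [polyOp_apply_sum, LinearMap.add_apply]
    exact Polynomial.sum_add_index p q _ (by simp) (by intros; ring)

lemma polyOp_monomial (σ : L ≃ₐ[K] L) (i : ℕ) (a : L) (x : L) :
    polyOp σ (Polynomial.monomial i a) x = a * (σ ^ i) x := by
  rw [polyOp_apply_sum]
  exact Polynomial.sum_monomial_index a (fun i a => a * (σ ^ i) x) (zero_mul _)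

lemma fixed_mem_bot [FiniteDimensional K L] [IsGalois K L] (σ : L ≃ₐ[K] L)
    (hgen : ∀ τ : L ≃ₐ[K] L, τ ∈ Subgroup.zpowers σ) (y : L) (hy : σ y = y) :
    ∃ a : K, algebraMap K L a = y := by
  have hstab : Subgroup.zpowers σ ≤ MulAction.stabilizer (L ≃ₐ[K] L) y :=
    Subgroup.zpowers_le.mpr hy
  have hfix : y ∈ IntermediateField.fixedField (⊤ : Subgroup (L ≃ₐ[K] L)) := by
    rintro ⟨τ, -⟩
    exact hstab (hgen τ)
  have hbot : IntermediateField.fixedField (⊤ : Subgroup (L ≃ₐ[K] L)) = ⊥ := by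
    have h := (IsGalois.tfae (F := K) (E := L)).out 0 1
    exact h.mp inferInstance
  rw [hbot, IntermediateField.mem_bot] at hfix
  exact hfix

lemma ker_step [FiniteDimensional K L] [IsGalois K L] (σ : L ≃ₐ[K] L)
    (hgen : ∀ τ : L ≃ₐ[K] L, τ ∈ Subgroup.zpowers σ) (u : L) (hu0 : u ≠ 0) :
    LinearMap.ker (σ.toLinearMap - LinearMap.mulLeft K (σ u * u⁻¹)) = Submodule.span K {u} := by
  set c : L := σ u * u⁻¹ with hc
  have hσu0 : σ u ≠ 0 := fun h => hu0 (by simpa using σ.injective (by simpa using h))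
  have hc0 : c ≠ 0 := mul_ne_zero hσu0 (inv_ne_zero hu0)
  apply le_antisymm
  · intro x hx
    have hx' : σ x = c * x := by
      have := LinearMap.mem_ker.mp hx
      simp only [LinearMap.sub_apply, LinearMap.mulLeft_apply, AlgEquiv.toLinearMap_apply] at this
      linear_combination this
    by_cases hx0 : x = 0
    · simp [hx0]
    have hy : σ (x * u⁻¹) = x * u⁻¹ := by
      rw [map_mul, map_inv₀, hx']
      field_simp [hc]
      ring_nf
      rw [hc, mul_assoc, inv_mul_cancel₀ hu0, mul_one]
    obtain ⟨a, ha⟩ := fixed_mem_bot σ hgen _ hy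
    rw [Submodule.mem_span_singleton]
    exact ⟨a, by rw [Algebra.smul_def, ha]; field_simp⟩
  · rw [Submodule.span_le, Set.singleton_subset_iff]
    simp only [SetLike.mem_coe, LinearMap.mem_ker, LinearMap.sub_apply,
      AlgEquiv.toLinearMap_apply, LinearMap.mulLeft_apply, hc]
    field_simp
    simp

lemma key [FiniteDimensional K L] [IsGalois K L] (σ : L ≃ₐ[K] L)
    (hgen : ∀ τ : L ≃ₐ[K] L, τ ∈ Subgroup.zpowers σ) :
    ∀ (k : ℕ) (U : Submodule K L), Module.finrank K U = k →
      ∃ w : Polynomial L, w.Monic ∧ w.natDegree = k ∧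
        LinearMap.ker (polyOp σ w) = U := by
  intro k
  induction k with
  | zero =>
    intro U hU
    refine ⟨1, monic_one, natDegree_one, ?_⟩
    have hU0 : U = ⊥ := Submodule.finrank_eq_zero.mp hU
    have h1 : polyOp σ (1 : Polynomial L) = LinearMap.id := by
      ext x
      have : (1 : Polynomial L) = Polynomial.monomial 0 1 := by simp
      rw [this, polyOp_monomial]
      simp
    rw [h1, hU0]
    exact LinearMap.ker_id
  | succ k IH =>
    intro U hU
    have hUne : U ≠ ⊥ := by
      intro h
      rw [h, finrank_bot] at hU
      omega
    obtain ⟨u, huU, hu0⟩ := Submodule.exists_mem_ne_zero_of_ne_bot hUne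
    set c : L := σ u * u⁻¹ with hc
    set f : L →ₗ[K] L := σ.toLinearMap - LinearMap.mulLeft K c with hf
    have hkerf : LinearMap.ker f = Submodule.span K {u} := ker_step σ hgen u hu0
    have hkerfU : LinearMap.ker f ≤ U := by
      rw [hkerf, Submodule.span_le, Set.singleton_subset_iff]
      exact huU
    set V : Submodule K L := Submodule.map f U with hV
    -- finrank V = k
    have hVrank : Module.finrank K V = k := by
      have hrn := LinearMap.finrank_range_add_finrank_ker (f.comp U.subtype)
      have hrange : LinearMap.range (f.comp U.subtype) = V := by
        rw [LinearMap.range_comp, Submodule.range_subtype]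
      have hker : LinearMap.ker (f.comp U.subtype) = Submodule.comap U.subtype (LinearMap.ker f) :=
        LinearMap.ker_comp _ _
      have hkerrank : Module.finrank K (LinearMap.ker (f.comp U.subtype)) = 1 := by
        rw [hker]
        rw [LinearEquiv.finrank_eq (Submodule.comapSubtypeEquivOfLe hkerfU)]
        rw [hkerf]
        exact finrank_span_singleton hu0
      rw [hrange, hkerrank, hU] at hrn
      omega
    obtain ⟨w', hw'm, hw'd, hw'k⟩ := IH V hVrank
    -- construct w
    set tw : Polynomial L := ∑ i ∈ Finset.range (k + 1),
      Polynomial.monomial i (w'.coeff i * (σ ^ i) c) with htw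
    set w : Polynomial L := Polynomial.X * w' - tw with hw
    have hmonXw' : (Polynomial.X * w').Monic := monic_X.mul hw'm
    have hndXw' : (Polynomial.X * w').natDegree = k + 1 := by
      rw [natDegree_mul X_ne_zero hw'm.ne_zero, natDegree_X, hw'd]
      omega
    have hdXw' : (Polynomial.X * w').degree = ((k + 1 : ℕ) : WithBot ℕ) := by
      rw [degree_eq_natDegree hmonXw'.ne_zero, hndXw']
    have htwdeg : tw.degree < (k + 1 : ℕ) := by
      apply lt_of_le_of_lt (Polynomial.degree_sum_le _ _)
      rw [Finset.sup_lt_iff (by exact_mod_cast WithBot.bot_lt_coe _)]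
      intro i hi
      apply lt_of_le_of_lt (Polynomial.degree_monomial_le i _)
      exact_mod_cast Finset.mem_range.mp hi
    have hwm : w.Monic := by
      rw [hw, sub_eq_add_neg]
      exact hmonXw'.add_of_left (by rw [degree_neg, hdXw']; exact htwdeg)
    have hwd : w.natDegree = k + 1 := by
      have : w.degree = ((k + 1 : ℕ) : WithBot ℕ) := by
        rw [hw, sub_eq_add_neg, degree_add_eq_left_of_degree_lt, hdXw']
        rw [degree_neg, hdXw']
        exact htwdeg
      exact natDegree_eq_of_degree_eq_some this
    -- operator identity
    have hop : polyOp σ w = (polyOp σ w').comp f := by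
      ext x
      have hXw' : Polynomial.X * w' = ∑ i ∈ Finset.range (k + 1),
          Polynomial.monomial (i + 1) (w'.coeff i) := by
        conv_lhs => rw [w'.as_sum_range' (k + 1) (by omega)]
        rw [Finset.mul_sum]
        exact Finset.sum_congr rfl fun i _ => X_mul_monomial i _
      have h1 : polyOp σ (Polynomial.X * w') x
          = ∑ i ∈ Finset.range (k + 1), w'.coeff i * (σ ^ (i + 1)) x := by
        rw [hXw']
        rw [show (polyOp σ (∑ i ∈ Finset.range (k + 1), Polynomial.monomial (i + 1) (w'.coeff i)))
            = ∑ i ∈ Finset.range (k + 1), polyOp σ (Polynomial.monomial (i + 1) (w'.coeff i))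
            from map_sum (polyOpHom σ) _ _]
        rw [LinearMap.sum_apply]
        exact Finset.sum_congr rfl fun i _ => polyOp_monomial σ _ _ _
      have h2 : polyOp σ tw x
          = ∑ i ∈ Finset.range (k + 1), w'.coeff i * (σ ^ i) c * (σ ^ i) x := by
        rw [htw]
        rw [show (polyOp σ (∑ i ∈ Finset.range (k + 1),
              Polynomial.monomial i (w'.coeff i * (σ ^ i) c)))
            = ∑ i ∈ Finset.range (k + 1), polyOp σ (Polynomial.monomial i (w'.coeff i * (σ ^ i) c))
            from map_sum (polyOpHom σ) _ _]
        rw [LinearMap.sum_apply]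
        exact Finset.sum_congr rfl fun i _ => polyOp_monomial σ _ _ _
      have hsub : polyOp σ w x = polyOp σ (Polynomial.X * w') x - polyOp σ tw x := by
        rw [hw]
        have h : polyOp σ (Polynomial.X * w' - tw)
            = polyOp σ (Polynomial.X * w') - polyOp σ tw :=
          map_sub (polyOpHom σ) (Polynomial.X * w') tw
        rw [h, LinearMap.sub_apply]
      rw [LinearMap.comp_apply, hsub, h1, h2, polyOp_apply, hw'd, ← Finset.sum_sub_distrib]
      apply Finset.sum_congr rfl
      intro i _
      have hfx : f x = σ x - c * x := by
        simp [hf, LinearMap.sub_apply, LinearMap.mulLeft_apply]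
      rw [hfx, pow_succ, AlgEquiv.mul_apply]
      simp only [map_sub, map_mul, map_inv₀, hc]
      ring
    -- kernel
    refine ⟨w, hwm, hwd, ?_⟩
    rw [hop, LinearMap.ker_comp, hw'k, hV, Submodule.comap_map_eq, hkerf]
    rw [sup_eq_left.mpr (hkerf ▸ hkerfU : Submodule.span K {u} ≤ U)]


/-- for a cyclic extension of degree `n` with Galois group generated by `σ`,
every `K`-subspace `U ≤ L` of dimension `k` (`1 ≤ k ≤ n`) is the kernel of `w(σ)` for some
monic polynomial `w ∈ L[t]` of degree `k`. -/
theorem statement14 [FiniteDimensional K L] [IsGalois K L]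
    (n : ℕ) (hn : Module.finrank K L = n)
    (σ : L ≃ₐ[K] L) (hgen : ∀ τ : L ≃ₐ[K] L, τ ∈ Subgroup.zpowers σ)
    (k : ℕ) (hk1 : 1 ≤ k) (hkn : k ≤ n)
    (U : Submodule K L) (hU : Module.finrank K U = k) :
    ∃ w : Polynomial L, w.Monic ∧ w.natDegree = k ∧
      LinearMap.ker (polyOp σ w) = U := by
  exact key σ hgen k U hU
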